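/- There is a group isomorphism from the Baumslag–Solitar group BS(1,2) to the semidirect product ℤ[1/2] ⋊ ℤ which sends the generator a to (1,0) and the generator t to (0,1). -/

import Mathlib

/-- A rational number is *dyadic* (an element of ℤ[1/2]) if it has the form `u·2^x`
with `u, x ∈ ℤ`. -/
def IsDyadic (q : ℚ) : Prop := ∃ u x : ℤ, q = (u : ℚ) * 2 ^ x

theorem isDyadic_int (z : ℤ) : IsDyadic (z : ℚ) := ⟨z, 0, by norm_num⟩

theorem isDyadic_zero : IsDyadic (0 : ℚ) := ⟨0, 0, by norm_num⟩

theorem isDyadic_one : IsDyadic (1 : ℚ) := ⟨1, 0, by norm_num⟩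

theorem IsDyadic.add {a b : ℚ} (ha : IsDyadic a) (hb : IsDyadic b) : IsDyadic (a + b) := by
  obtain ⟨u, x, rfl⟩ := ha
  obtain ⟨v, y, rfl⟩ := hb
  rcases le_total x y with h | h
  · refine ⟨u + v * 2 ^ (y - x).toNat, x, ?_⟩
    have h2 : (((y - x).toNat : ℤ)) = y - x := Int.toNat_of_nonneg (by omega)
    have h3 : (2 : ℚ) ^ ((y - x).toNat) = (2 : ℚ) ^ (y - x : ℤ) := by
      rw [← zpow_natCast (2 : ℚ) (y - x).toNat, h2]
    have h4 : y - x + x = y := by omega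
    push_cast
    rw [h3, add_mul, mul_assoc, ← zpow_add₀ (by norm_num : (2:ℚ) ≠ 0), h4]
  · refine ⟨u * 2 ^ (x - y).toNat + v, y, ?_⟩
    have h2 : (((x - y).toNat : ℤ)) = x - y := Int.toNat_of_nonneg (by omega)
    have h3 : (2 : ℚ) ^ ((x - y).toNat) = (2 : ℚ) ^ (x - y : ℤ) := by
      rw [← zpow_natCast (2 : ℚ) (x - y).toNat, h2]
    have h4 : x - y + y = x := by omega
    push_cast
    rw [h3, add_mul, mul_assoc, ← zpow_add₀ (by norm_num : (2:ℚ) ≠ 0), h4]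

theorem IsDyadic.neg {a : ℚ} (ha : IsDyadic a) : IsDyadic (-a) := by
  obtain ⟨u, x, rfl⟩ := ha
  exact ⟨-u, x, by push_cast; ring⟩

theorem IsDyadic.zpow_mul (x : ℤ) {a : ℚ} (ha : IsDyadic a) : IsDyadic (2 ^ x * a) := by
  obtain ⟨u, y, rfl⟩ := ha
  exact ⟨u, x + y, by rw [zpow_add₀ (by norm_num : (2:ℚ) ≠ 0)]; ring⟩

theorem IsDyadic.mul_zpow {a : ℚ} (ha : IsDyadic a) (x : ℤ) : IsDyadic (a * 2 ^ x) := by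
  obtain ⟨u, y, rfl⟩ := ha
  exact ⟨u, y + x, by rw [zpow_add₀ (by norm_num : (2:ℚ) ≠ 0)]; ring⟩

/-- The additive group ℤ[1/2] of dyadic rationals. -/
def ZHalf : Type := {q : ℚ // IsDyadic q}

/-- The semidirect product ℤ[1/2] ⋊ ℤ: pairs `(r, m)` with `r ∈ ℤ[1/2]`, `m ∈ ℤ`,
and multiplication `(r, m)·(s, n) = (r + 2^m·s, m + n)`. -/
def SDP : Type := ZHalf × ℤ

instance : Group SDP where
  mul p q := (⟨p.1.1 + 2 ^ p.2 * q.1.1, p.1.2.add (IsDyadic.zpow_mul _ q.1.2)⟩, p.2 + q.2)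
  one := (⟨0, isDyadic_zero⟩, 0)
  inv p := (⟨-(2 ^ (-p.2) * p.1.1), (IsDyadic.zpow_mul _ p.1.2).neg⟩, -p.2)
  mul_assoc p q r := by
    refine Prod.ext (Subtype.ext ?_) ?_
    · show (p.1.1 + 2 ^ p.2 * q.1.1) + 2 ^ (p.2 + q.2) * r.1.1
        = p.1.1 + 2 ^ p.2 * (q.1.1 + 2 ^ q.2 * r.1.1)
      rw [zpow_add₀ (by norm_num : (2:ℚ) ≠ 0)]; ring
    · show p.2 + q.2 + r.2 = p.2 + (q.2 + r.2); ring
  one_mul p := by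
    refine Prod.ext (Subtype.ext ?_) ?_
    · show (0 : ℚ) + 2 ^ (0 : ℤ) * p.1.1 = p.1.1
      norm_num
    · show 0 + p.2 = p.2; ring
  mul_one p := by
    refine Prod.ext (Subtype.ext ?_) ?_
    · show p.1.1 + 2 ^ p.2 * 0 = p.1.1
      ring
    · show p.2 + 0 = p.2; ring
  inv_mul_cancel p := by
    refine Prod.ext (Subtype.ext ?_) ?_
    · show -(2 ^ (-p.2) * p.1.1) + 2 ^ (-p.2) * p.1.1 = (0 : ℚ)
      ring
    · show -p.2 + p.2 = 0; ring

@[simp] theorem SDP.mul_fst (p q : SDP) : (p * q).1.1 = p.1.1 + 2 ^ p.2 * q.1.1 := rfl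
@[simp] theorem SDP.mul_snd (p q : SDP) : (p * q).2 = p.2 + q.2 := rfl
@[simp] theorem SDP.one_fst : (1 : SDP).1.1 = 0 := rfl
@[simp] theorem SDP.one_snd : (1 : SDP).2 = 0 := rfl
@[simp] theorem SDP.inv_fst (p : SDP) : (p⁻¹).1.1 = -(2 ^ (-p.2) * p.1.1) := rfl
@[simp] theorem SDP.inv_snd (p : SDP) : (p⁻¹).2 = -p.2 := rfl

/-- The single relator `t a t⁻¹ a⁻²` of the Baumslag–Solitar group BS(1,2),
with `a` the generator of index `0` and `t` the generator of index `1`. -/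
def bsRels : Set (FreeGroup (Fin 2)) :=
  {FreeGroup.of 1 * FreeGroup.of 0 * (FreeGroup.of 1)⁻¹ * (FreeGroup.of 0 * FreeGroup.of 0)⁻¹}

/-- The Baumslag–Solitar group BS(1,2) = ⟨a, t ∣ t a t⁻¹ = a²⟩. -/
abbrev BS12 : Type := PresentedGroup bsRels

/-- The generator `a` of BS(1,2). -/
def bsA : BS12 := PresentedGroup.of 0

/-- The generator `t` of BS(1,2). -/
def bsT : BS12 := PresentedGroup.of 1


/-! ### Auxiliary material for the isomorphism -/

def sA : SDP := (⟨1, isDyadic_one⟩, 0)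
def sT : SDP := (⟨0, isDyadic_zero⟩, 1)

theorem sA_zpow (u : ℤ) : ((sA ^ u).1.1 = (u : ℚ)) ∧ (sA ^ u).2 = 0 := by
  induction u using Int.induction_on with
  | zero => constructor <;> simp [SDP.one_fst, SDP.one_snd] <;> rfl
  | succ n ih =>
      rw [zpow_add_one]
      refine ⟨?_, ?_⟩
      · rw [SDP.mul_fst, ih.1, ih.2]
        show ((n : ℤ) : ℚ) + 2 ^ (0 : ℤ) * 1 = (((n : ℤ) + 1 : ℤ) : ℚ)
        push_cast; ring
      · rw [SDP.mul_snd, ih.2]; rfl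
  | pred n ih =>
      rw [zpow_sub_one]
      refine ⟨?_, ?_⟩
      · rw [SDP.mul_fst, ih.1, ih.2, SDP.inv_fst]
        show ((-n : ℤ) : ℚ) + 2 ^ (0 : ℤ) * -(2 ^ (-(0 : ℤ)) * 1) = ((-(n : ℤ) - 1 : ℤ) : ℚ)
        push_cast; ring
      · rw [SDP.mul_snd, ih.2, SDP.inv_snd]; rfl

theorem sT_zpow (m : ℤ) : ((sT ^ m).1.1 = (0 : ℚ)) ∧ (sT ^ m).2 = m := by
  induction m using Int.induction_on with
  | zero => constructor <;> simp [SDP.one_fst, SDP.one_snd]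
  | succ n ih =>
      rw [zpow_add_one]
      refine ⟨?_, ?_⟩
      · rw [SDP.mul_fst, ih.1]
        show (0 : ℚ) + _ * 0 = 0; ring
      · rw [SDP.mul_snd, ih.2]; rfl
  | pred n ih =>
      rw [zpow_sub_one]
      refine ⟨?_, ?_⟩
      · rw [SDP.mul_fst, ih.1, SDP.inv_fst]
        show (0 : ℚ) + _ * -(_ * 0) = 0; ring
      · rw [SDP.mul_snd, ih.2, SDP.inv_snd]; rfl

/-- The defining relation in BS(1,2). -/
theorem bs_rel : bsT * bsA * bsT⁻¹ = bsA * bsA := by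
  have h : (QuotientGroup.mk (FreeGroup.of 1 * FreeGroup.of 0 * (FreeGroup.of 1)⁻¹ *
      (FreeGroup.of 0 * FreeGroup.of 0)⁻¹) : BS12) = 1 := by
    rw [QuotientGroup.eq_one_iff]
    exact Subgroup.subset_normalClosure rfl
  have h2 : bsT * bsA * bsT⁻¹ * (bsA * bsA)⁻¹ = 1 := by
    exact h
  calc bsT * bsA * bsT⁻¹ = bsT * bsA * bsT⁻¹ * (bsA * bsA)⁻¹ * (bsA * bsA) := by group
  _ = 1 * (bsA * bsA) := by rw [h2]
  _ = bsA * bsA := one_mul _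

theorem bs_conj (u : ℤ) : bsT * bsA ^ u * bsT⁻¹ = bsA ^ (2 * u) := by
  calc bsT * bsA ^ u * bsT⁻¹ = (bsT * bsA * bsT⁻¹) ^ u := by
        rw [conj_zpow]
  _ = (bsA * bsA) ^ u := by rw [bs_rel]
  _ = bsA ^ (2 * u) := by rw [← zpow_two, ← zpow_mul]

theorem bs_conjN (n : ℕ) (u : ℤ) : bsT ^ n * bsA ^ u * (bsT ^ n)⁻¹ = bsA ^ (2 ^ n * u) := by
  induction n generalizing u with
  | zero => simpa using rfl
  | succ n ih =>
      have : bsT ^ (n + 1) * bsA ^ u * (bsT ^ (n + 1))⁻¹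
          = bsT ^ n * (bsT * bsA ^ u * bsT⁻¹) * (bsT ^ n)⁻¹ := by
        rw [pow_succ]; group
      rw [this, bs_conj, ih]
      congr 1
      ring

/-- The normal-form element `t^(-k) a^u t^(k+m)`. -/
def E (k : ℕ) (u m : ℤ) : BS12 := bsT ^ (-(k : ℤ)) * bsA ^ u * bsT ^ ((k : ℤ) + m)

theorem E_step (k : ℕ) (u m : ℤ) : E (k + 1) (2 * u) m = E k u m := by
  unfold E
  rw [← bs_conj u]
  have hk : (((k : ℕ) + 1 : ℕ) : ℤ) = (k : ℤ) + 1 := by push_cast; ring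
  rw [hk]
  group

theorem E_stepN (k j : ℕ) (u m : ℤ) : E (k + j) (2 ^ j * u) m = E k u m := by
  induction j with
  | zero => simp
  | succ j ih =>
      have h1 : k + (j + 1) = (k + j) + 1 := by ring
      have h2 : (2 : ℤ) ^ (j + 1) * u = 2 * (2 ^ j * u) := by ring
      rw [h1, h2, E_step, ih]

theorem E_welldef_le {k l : ℕ} (h : k ≤ l) (u v m : ℤ)
    (hq : (u : ℚ) * 2 ^ (-(k : ℤ)) = (v : ℚ) * 2 ^ (-(l : ℤ))) : E k u m = E l v m := by
  have hv : v = 2 ^ (l - k) * u := by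
    have h2 : (v : ℚ) = 2 ^ ((l - k : ℕ) : ℤ) * u := by
      have hne : (2 : ℚ) ≠ 0 := by norm_num
      have := hq
      rw [mul_comm (u : ℚ), mul_comm (v : ℚ)] at this
      have h3 : (v : ℚ) = 2 ^ ((l : ℤ)) * (2 ^ (-(k : ℤ)) * u) := by
        field_simp [zpow_neg] at this ⊢
        rw [this, mul_right_comm, ← zpow_add₀ hne]; simp
      rw [h3, ← mul_assoc, ← zpow_add₀ hne]
      congr 2
      omega
    have h4 : ((2 ^ (l - k) * u : ℤ) : ℚ) = 2 ^ ((l - k : ℕ) : ℤ) * u := by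
      push_cast
      rw [← zpow_natCast (2 : ℚ) (l - k)]
    exact_mod_cast h2.trans h4.symm
  have hl : l = k + (l - k) := by omega
  have h5 := E_stepN k (l - k) u m
  rw [← hl] at h5
  rw [hv]
  exact h5.symm

theorem E_welldef {k l : ℕ} (u v m : ℤ)
    (hq : (u : ℚ) * 2 ^ (-(k : ℤ)) = (v : ℚ) * 2 ^ (-(l : ℤ))) : E k u m = E l v m := by
  rcases le_total k l with h | h
  · exact E_welldef_le h u v m hq
  · exact (E_welldef_le h v u m hq.symm).symm

theorem exists_rep (q : ℚ) (hq : IsDyadic q) :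
    ∃ w : ℕ × ℤ, q = (w.2 : ℚ) * 2 ^ (-(w.1 : ℤ)) := by
  obtain ⟨u, x, rfl⟩ := hq
  rcases le_total 0 x with h | h
  · refine ⟨(0, u * 2 ^ x.toNat), ?_⟩
    have : ((x.toNat : ℕ) : ℤ) = x := Int.toNat_of_nonneg h
    push_cast
    rw [← zpow_natCast (2 : ℚ) x.toNat, this]
    norm_num
  · refine ⟨((-x).toNat, u), ?_⟩
    congr 1
    congr 1
    omega

noncomputable def repw (p : SDP) : ℕ × ℤ := (exists_rep p.1.1 p.1.2).choose

theorem repw_spec (p : SDP) : p.1.1 = ((repw p).2 : ℚ) * 2 ^ (-((repw p).1 : ℤ)) :=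
  (exists_rep p.1.1 p.1.2).choose_spec

/-- The inverse map SDP → BS12. -/
noncomputable def ψ (p : SDP) : BS12 := E (repw p).1 (repw p).2 p.2

theorem psi_eq (p : SDP) (k : ℕ) (u : ℤ) (h : p.1.1 = (u : ℚ) * 2 ^ (-(k : ℤ))) :
    ψ p = E k u p.2 := by
  unfold ψ
  exact E_welldef _ _ _ ((repw_spec p).symm.trans h)

/-- Key computation: multiplying the normal form by `a` on the right. -/
theorem E_mul_a (k : ℕ) (u m : ℤ) :
    E (k + (-m).toNat) (u * 2 ^ ((-m).toNat) + 2 ^ ((k : ℤ) + ((-m).toNat : ℤ) + m).toNat) m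
      = E k u m * bsA := by
  set j : ℕ := (-m).toNat with hj
  set n : ℕ := ((k : ℤ) + (j : ℤ) + m).toNat with hn
  have hnz : (n : ℤ) = (k : ℤ) + (j : ℤ) + m := by
    rw [hn]; exact Int.toNat_of_nonneg (by omega)
  have h1 : E (k + j) (2 ^ j * u) 0 = E k u 0 := E_stepN k j u 0
  have h2 : bsA ^ ((2 : ℤ) ^ n) = bsT ^ n * bsA * (bsT ^ n)⁻¹ := by
    have := bs_conjN n 1
    rw [mul_one] at this
    rw [← this, zpow_one]
  have hsplit : bsA ^ (u * 2 ^ j + 2 ^ n) = bsA ^ (2 ^ j * u) * bsA ^ ((2 : ℤ) ^ n) := by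
    rw [← zpow_add]
    congr 1
    ring
  unfold E at h1 ⊢
  rw [hsplit, h2]
  rw [add_zero, add_zero] at h1
  have hKj : ((k + j : ℕ) : ℤ) = (k : ℤ) + (j : ℤ) := by push_cast; ring
  have hTn : (bsT ^ n : BS12) = bsT ^ ((n : ℤ)) := (zpow_natCast bsT n).symm
  rw [hKj, hTn, hnz]
  calc bsT ^ (-((k : ℤ) + j)) * (bsA ^ (2 ^ j * u) *
        (bsT ^ ((k : ℤ) + j + m) * bsA * (bsT ^ ((k : ℤ) + j + m))⁻¹)) *
        bsT ^ ((k : ℤ) + j + m)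
      = (bsT ^ (-((k : ℤ) + j)) * bsA ^ (2 ^ j * u) * bsT ^ ((k : ℤ) + j)) *
        (bsT ^ m * bsA) := by
        rw [← zpow_neg]
        rw [show (-((k : ℤ) + j + m)) = -((k:ℤ)+j) + -m by ring,
            show ((k : ℤ) + j + m) = ((k:ℤ)+j) + m by ring]
        rw [zpow_add bsT (-((k:ℤ)+j)) (-m), zpow_add bsT ((k:ℤ)+j) m]
        group
  _ = (bsT ^ (-(k : ℤ)) * bsA ^ u * bsT ^ (k : ℤ)) * (bsT ^ m * bsA) := by
        rw [← hKj, h1]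
  _ = bsT ^ (-(k : ℤ)) * bsA ^ u * bsT ^ ((k : ℤ) + m) * bsA := by
        rw [zpow_add bsT (k : ℤ) m]
        group

theorem psi_mul_sA (q : SDP) : ψ (q * sA) = ψ q * bsA := by
  set k : ℕ := (repw q).1
  set u : ℤ := (repw q).2
  have hq : q.1.1 = (u : ℚ) * 2 ^ (-(k : ℤ)) := repw_spec q
  set m : ℤ := q.2 with hm
  set j : ℕ := (-m).toNat with hj
  set U : ℤ := u * 2 ^ j + 2 ^ ((k : ℤ) + (j : ℤ) + m).toNat with hU
  have hjm : (j : ℤ) + m ≥ 0 := by rw [hj]; omega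
  have hrep : (q * sA).1.1 = (U : ℚ) * 2 ^ (-((k + j : ℕ) : ℤ)) := by
    rw [SDP.mul_fst, hq]
    show (u : ℚ) * 2 ^ (-(k : ℤ)) + 2 ^ (m : ℤ) * 1 = _
    have hnz : (((k : ℤ) + (j : ℤ) + m).toNat : ℤ) = (k : ℤ) + (j : ℤ) + m :=
      Int.toNat_of_nonneg (by omega)
    have hne : (2 : ℚ) ≠ 0 := by norm_num
    have e1 : ((U : ℤ) : ℚ) = (u : ℚ) * 2 ^ ((j : ℤ)) + 2 ^ ((k : ℤ) + (j : ℤ) + m) := by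
      rw [hU]
      push_cast
      rw [← zpow_natCast (2 : ℚ) j, ← zpow_natCast (2 : ℚ) ((k : ℤ) + (j : ℤ) + m).toNat, hnz]
    have e2 : (-((k + j : ℕ) : ℤ)) = -((k : ℤ) + (j : ℤ)) := by push_cast; ring
    rw [e1, e2, add_mul, mul_assoc, ← zpow_add₀ hne, ← zpow_add₀ hne,
      show (j : ℤ) + -((k : ℤ) + (j : ℤ)) = -(k : ℤ) by ring,
      show ((k : ℤ) + (j : ℤ) + m) + -((k : ℤ) + (j : ℤ)) = m by ring]
    ring
  have h2 : (q * sA).2 = m := by rw [SDP.mul_snd]; show q.2 + 0 = m; rw [add_zero]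
  rw [psi_eq (q * sA) (k + j) U hrep, h2, psi_eq q k u hq, ← hm]
  have := E_mul_a k u m
  rw [← hj, ← hU] at this
  convert this using 3 <;> push_cast <;> ring

theorem psi_mul_sT (q : SDP) : ψ (q * sT) = ψ q * bsT := by
  set k : ℕ := (repw q).1
  set u : ℤ := (repw q).2
  have hq : q.1.1 = (u : ℚ) * 2 ^ (-(k : ℤ)) := repw_spec q
  have hrep : (q * sT).1.1 = (u : ℚ) * 2 ^ (-(k : ℤ)) := by
    rw [SDP.mul_fst, hq]
    show _ + 2 ^ (q.2 : ℤ) * 0 = _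
    ring
  have h2 : (q * sT).2 = q.2 + 1 := by rw [SDP.mul_snd]; rfl
  rw [psi_eq (q * sT) k u hrep, h2, psi_eq q k u hq]
  unfold E
  rw [show (k : ℤ) + (q.2 + 1) = ((k : ℤ) + q.2) + 1 by ring, zpow_add, zpow_one]
  group

theorem psi_one : ψ 1 = 1 := by
  rw [psi_eq 1 0 0 (by norm_num [SDP.one_fst])]
  unfold E
  simp

def fgen : Fin 2 → SDP := ![sA, sT]

theorem frels : ∀ r ∈ bsRels, FreeGroup.lift fgen r = 1 := by
  intro r hr
  rw [bsRels, Set.mem_singleton_iff] at hr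
  subst hr
  simp only [map_mul, map_inv, FreeGroup.lift_apply_of, fgen]
  show sT * sA * sT⁻¹ * (sA * sA)⁻¹ = 1
  have h : sT * sA * sT⁻¹ = sA * sA := by
    refine Prod.ext (Subtype.ext ?_) ?_
    · simp only [SDP.mul_fst, SDP.mul_snd, SDP.inv_fst, SDP.inv_snd]; simp only [sA, sT]
      norm_num
    · simp only [SDP.mul_snd, SDP.inv_snd]; simp only [sA, sT]
      norm_num
  rw [h]
  group

/-- The homomorphism BS12 →* SDP. -/
def φh : BS12 →* SDP := PresentedGroup.toGroup frels

theorem phi_a : φh bsA = sA := PresentedGroup.toGroup.of frels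

theorem phi_t : φh bsT = sT := PresentedGroup.toGroup.of frels

theorem phi_E (k : ℕ) (u m : ℤ) :
    ((φh (E k u m)).1.1 = (u : ℚ) * 2 ^ (-(k : ℤ))) ∧ (φh (E k u m)).2 = m := by
  unfold E
  rw [map_mul, map_mul, map_zpow, map_zpow, map_zpow, phi_a, phi_t]
  have hA := sA_zpow u
  have hT1 := sT_zpow (-(k : ℤ))
  have hT2 := sT_zpow ((k : ℤ) + m)
  constructor
  · simp only [SDP.mul_fst, SDP.mul_snd]
    rw [hT1.1, hT1.2, hA.1, hA.2, hT2.1]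
    ring
  · simp only [SDP.mul_snd]
    rw [hT1.2, hA.2, hT2.2]
    ring

theorem psi_phi (g : BS12) : ∀ q : SDP, ψ (q * φh g) = ψ q * g := by
  have hmem : g ∈ Subgroup.closure (Set.range (PresentedGroup.of : Fin 2 → BS12)) := by
    rw [PresentedGroup.closure_range_of]; trivial
  induction hmem using Subgroup.closure_induction with
  | mem x hx =>
      obtain ⟨i, rfl⟩ := hx
      fin_cases i
      · intro q
        show ψ (q * φh bsA) = ψ q * bsA
        rw [phi_a]
        exact psi_mul_sA q
      · intro q
        show ψ (q * φh bsT) = ψ q * bsT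
        rw [phi_t]
        exact psi_mul_sT q
  | one => intro q; rw [map_one, mul_one, mul_one]
  | mul x y _ _ hx hy =>
      intro q
      rw [map_mul, ← mul_assoc, ← mul_assoc, ← hx q]
      exact hy _
  | inv x _ hx =>
      intro q
      have := hx (q * φh x⁻¹)
      rw [mul_assoc, ← map_mul, inv_mul_cancel, map_one, mul_one] at this
      rw [this]
      group

/-- There is a group isomorphism from BS(1,2) to the semidirect
product ℤ[1/2] ⋊ ℤ sending the generator `a` to `(1,0)` and `t` to `(0,1)`. -/
theorem bs12_iso_sdp :
    ∃ φ : BS12 ≃* SDP,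
      φ bsA = ((⟨1, isDyadic_one⟩ : ZHalf), (0 : ℤ)) ∧
      φ bsT = ((⟨0, isDyadic_zero⟩ : ZHalf), (1 : ℤ)) := by
  have left_inv : ∀ g : BS12, ψ (φh g) = g := by
    intro g
    have := psi_phi g 1
    rwa [one_mul, psi_one, one_mul] at this
  have right_inv : ∀ p : SDP, φh (ψ p) = p := by
    intro p
    have hq : p.1.1 = ((repw p).2 : ℚ) * 2 ^ (-((repw p).1 : ℤ)) := repw_spec p
    have hE := phi_E (repw p).1 (repw p).2 p.2
    show φh (E (repw p).1 (repw p).2 p.2) = p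
    refine Prod.ext (Subtype.ext ?_) ?_
    · rw [hE.1, ← hq]
    · rw [hE.2]
  refine ⟨⟨⟨φh, ψ, left_inv, right_inv⟩, φh.map_mul⟩, ?_, ?_⟩
  · exact phi_a
  · exact phi_t
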